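/- With ℰ_t = (ℰ−1) − t(ℰ'−1) for i.i.d. standard exponentials ℰ, ℰ', and μ_t = E|ℰ_t| = (2/e)e^t/(1+t), the function t ↦ ‖ℰ_t/μ_t‖_2 is strictly increasing on [0,1]; explicitly, ‖ℰ_t/μ_t‖_2² = (1/4)e^{2(1-t)}(1+t²)(1+t)². -/

import Mathlib

open MeasureTheory ProbabilityTheory Real Set
open scoped ENNReal NNReal

/-- Density of a standard exponential random variable. -/
noncomputable def expPDF : ℝ → ℝ := fun x => if 0 < x then Real.exp (-x) else 0

/-- `X` has density `f` with respect to Lebesgue measure. -/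
def HasDensity {Ω : Type*} [MeasurableSpace Ω] (P : Measure Ω) (X : Ω → ℝ) (f : ℝ → ℝ) : Prop :=
  Measurable X ∧ Measure.map X P = volume.withDensity (fun x => ENNReal.ofReal (f x))

lemma expPDF_measurable : Measurable expPDF := by
  unfold expPDF
  exact Measurable.ite measurableSet_Ioi (by fun_prop) measurable_const

lemma expPDF_nonneg (x : ℝ) : 0 ≤ expPDF x := by
  unfold expPDF; split <;> positivity

lemma hasDensity_exp_integral {Ω : Type*} [MeasurableSpace Ω] {P : Measure Ω} {X : Ω → ℝ}
    (hX : HasDensity P X expPDF) {g : ℝ → ℝ} (hg : Measurable g)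
    (hint : IntegrableOn (fun x => Real.exp (-x) * g x) (Ioi 0)) :
    Integrable (fun ω => g (X ω)) P ∧
      ∫ ω, g (X ω) ∂P = ∫ x in Ioi (0:ℝ), Real.exp (-x) * g x := by
  obtain ⟨hXm, hmap⟩ := hX
  have hd : AEMeasurable (fun x => (expPDF x).toNNReal) (volume : Measure ℝ) :=
    (expPDF_measurable.real_toNNReal).aemeasurable
  have hsmul : ∀ x : ℝ, ((expPDF x).toNNReal : ℝ) • g x
      = (Ioi (0:ℝ)).indicator (fun x => Real.exp (-x) * g x) x := by
    intro x
    rw [smul_eq_mul, Real.coe_toNNReal _ (expPDF_nonneg x)]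
    by_cases hx : 0 < x
    · rw [indicator_of_mem (Set.mem_Ioi.mpr hx)]; simp [expPDF, hx]
    · rw [indicator_of_notMem (fun h => hx (Set.mem_Ioi.mp h))]; simp [expPDF, hx]
  have hrw : (fun x : ℝ => ENNReal.ofReal (expPDF x))
      = (fun x : ℝ => ((expPDF x).toNNReal : ℝ≥0∞)) := rfl
  constructor
  · have : Integrable g (Measure.map X P) := by
      rw [hmap, hrw, integrable_withDensity_iff_integrable_coe_smul₀ hd]
      have : (fun x => ((expPDF x).toNNReal : ℝ) • g x)
          = (Ioi (0:ℝ)).indicator (fun x => Real.exp (-x) * g x) := funext hsmul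
      rw [this, integrable_indicator_iff measurableSet_Ioi]
      exact hint
    exact ((integrable_map_measure hg.aestronglyMeasurable hXm.aemeasurable).mp this)
  · rw [← integral_map hXm.aemeasurable hg.aestronglyMeasurable, hmap, hrw,
      integral_withDensity_eq_integral_smul₀ hd g]
    have : (fun x => ((expPDF x).toNNReal : ℝ≥0) • g x)
        = (Ioi (0:ℝ)).indicator (fun x => Real.exp (-x) * g x) := by
      funext x; rw [← hsmul x]; rfl
    rw [this, integral_indicator measurableSet_Ioi]

lemma exp_moment {Ω : Type*} [MeasurableSpace Ω] {P : Measure Ω} {X : Ω → ℝ}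
    (hX : HasDensity P X expPDF) (n : ℕ) :
    Integrable (fun ω => X ω ^ n) P ∧ ∫ ω, X ω ^ n ∂P = (Nat.factorial n : ℝ) := by
  have hint : IntegrableOn (fun x => Real.exp (-x) * x ^ n) (Ioi (0:ℝ)) := by
    have h := Real.GammaIntegral_convergent (s := (n : ℝ) + 1) (by positivity)
    refine h.congr_fun (fun x hx => ?_) measurableSet_Ioi
    rw [add_sub_cancel_right]; simp only [Real.rpow_natCast]
  obtain ⟨h1, h2⟩ := hasDensity_exp_integral hX (measurable_id.pow_const n) hint
  simp only [id_eq] at h1 h2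
  refine ⟨h1, ?_⟩
  rw [h2, show ((Nat.factorial n : ℝ)) = Real.Gamma ((n:ℝ)+1) from (Real.Gamma_nat_eq_factorial n).symm,
    Real.Gamma_eq_integral (by positivity : (0:ℝ) < (n : ℝ) + 1)]
  refine setIntegral_congr_fun measurableSet_Ioi fun x hx => ?_
  rw [add_sub_cancel_right, Real.rpow_natCast]

lemma exp_centered {Ω : Type*} [MeasurableSpace Ω] {P : Measure Ω} [IsProbabilityMeasure P]
    {X : Ω → ℝ} (hX : HasDensity P X expPDF) :
    Integrable (fun ω => X ω - 1) P ∧ (∫ ω, (X ω - 1) ∂P) = 0 ∧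
    Integrable (fun ω => (X ω - 1) ^ 2) P ∧ (∫ ω, (X ω - 1) ^ 2 ∂P) = 1 := by
  have hm1 := exp_moment hX 1
  have hm2 := exp_moment hX 2
  have hX1 : Integrable X P := by simpa using hm1.1
  have hX1v : ∫ ω, X ω ∂P = 1 := by simpa using hm1.2
  have hX2 : Integrable (fun ω => X ω ^ 2) P := hm2.1
  have hX2v : ∫ ω, X ω ^ 2 ∂P = 2 := by
    rw [hm2.2]; norm_num [Nat.factorial]
  have hI1 : Integrable (fun ω => X ω - 1) P := hX1.sub (integrable_const 1)
  have hv1 : (∫ ω, (X ω - 1) ∂P) = 0 := by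
    rw [integral_sub hX1 (integrable_const 1), hX1v, integral_const]
    simp
  have hfun : (fun ω => (X ω - 1) ^ 2) = fun ω => X ω ^ 2 - 2 * X ω + 1 := by
    funext ω; ring
  have hIc : Integrable (fun ω => 2 * X ω) P := hX1.const_mul 2
  have hIa : Integrable (fun ω => X ω ^ 2 - 2 * X ω) P := hX2.sub hIc
  have hI2 : Integrable (fun ω => (X ω - 1) ^ 2) P := by
    rw [hfun]
    exact hIa.add (integrable_const 1)
  refine ⟨hI1, hv1, hI2, ?_⟩
  rw [hfun, integral_add hIa (integrable_const 1),
    integral_sub hX2 hIc, integral_const_mul, hX2v, hX1v, integral_const]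
  simp

theorem stmt_11 {Ω : Type} [MeasurableSpace Ω] (P : Measure Ω) [IsProbabilityMeasure P]
    (E E' : Ω → ℝ) (hE : HasDensity P E expPDF) (hE' : HasDensity P E' expPDF)
    (hind : IndepFun E E' P)
    (μ : ℝ → ℝ) (hμ : ∀ t, μ t = (2 / Real.exp 1) * Real.exp t / (1 + t)) :
    StrictMonoOn
      (fun t => (∫ ω, (((E ω - 1) - t * (E' ω - 1)) / μ t) ^ 2 ∂P) ^ ((1 : ℝ) / 2))
      (Set.Icc 0 1) ∧
    ∀ t ∈ Set.Icc (0 : ℝ) 1,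
      (∫ ω, (((E ω - 1) - t * (E' ω - 1)) / μ t) ^ 2 ∂P) =
        (1 / 4) * Real.exp (2 * (1 - t)) * (1 + t ^ 2) * (1 + t) ^ 2 := by
  obtain ⟨ha1, ha1v, ha2, ha2v⟩ := exp_centered hE
  obtain ⟨hb1, hb1v, hb2, hb2v⟩ := exp_centered hE'
  have hindab : IndepFun (fun ω => E ω - 1) (fun ω => E' ω - 1) P :=
    hind.comp (measurable_id.sub measurable_const) (measurable_id.sub measurable_const)
  have hab : Integrable (fun ω => (E ω - 1) * (E' ω - 1)) P :=
    hindab.integrable_mul ha1 hb1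
  have habv : ∫ ω, (E ω - 1) * (E' ω - 1) ∂P = 0 := by
    have h : ∫ ω, (E ω - 1) * (E' ω - 1) ∂P
        = (∫ ω, (E ω - 1) ∂P) * ∫ ω, (E' ω - 1) ∂P :=
      hindab.integral_fun_mul_eq_mul_integral ha1.aestronglyMeasurable hb1.aestronglyMeasurable
    rw [h, ha1v, hb1v]; ring
  have key : ∀ t : ℝ, ∫ ω, ((E ω - 1) - t * (E' ω - 1)) ^ 2 ∂P = 1 + t ^ 2 := by
    intro t
    have hexpand : (fun ω => ((E ω - 1) - t * (E' ω - 1)) ^ 2)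
        = fun ω => ((E ω - 1) ^ 2 - (2 * t) * ((E ω - 1) * (E' ω - 1)))
            + t ^ 2 * (E' ω - 1) ^ 2 := by
      funext ω; ring
    have hI2t : Integrable (fun ω => (2 * t) * ((E ω - 1) * (E' ω - 1))) P :=
      hab.const_mul _
    have hIsub : Integrable
        (fun ω => (E ω - 1) ^ 2 - (2 * t) * ((E ω - 1) * (E' ω - 1))) P := ha2.sub hI2t
    have hIt2 : Integrable (fun ω => t ^ 2 * (E' ω - 1) ^ 2) P := hb2.const_mul _
    rw [hexpand, integral_add hIsub hIt2, integral_sub ha2 hI2t,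
      integral_const_mul, integral_const_mul, ha2v, habv, hb2v]
    ring
  have hval : ∀ t ∈ Set.Icc (0:ℝ) 1,
      (∫ ω, (((E ω - 1) - t * (E' ω - 1)) / μ t) ^ 2 ∂P) =
        (1 / 4) * Real.exp (2 * (1 - t)) * (1 + t ^ 2) * (1 + t) ^ 2 := by
    intro t ht
    have h1t : (0:ℝ) < 1 + t := by linarith [ht.1]
    have hdp : (fun ω => (((E ω - 1) - t * (E' ω - 1)) / μ t) ^ 2)
        = fun ω => ((E ω - 1) - t * (E' ω - 1)) ^ 2 / (μ t) ^ 2 := by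
      funext ω; rw [div_pow]
    rw [hdp, integral_div, key t, hμ]
    have hkey : Real.exp (2 * (1 - t)) * Real.exp t ^ 2 = Real.exp 1 ^ 2 := by
      rw [sq, sq, ← Real.exp_add, ← Real.exp_add, ← Real.exp_add]; ring_nf
    have he := Real.exp_pos 1
    have het := Real.exp_pos t
    field_simp
    linear_combination (-4) * hkey
  refine ⟨?_, hval⟩
  set F : ℝ → ℝ := fun t => (1 / 4) * Real.exp (2 * (1 - t)) * (1 + t ^ 2) * (1 + t) ^ 2 with hF
  have hder : ∀ t : ℝ, HasDerivAt F
      ((1 / 2) * Real.exp (2 * (1 - t)) * t ^ 2 * (1 - t) * (1 + t)) t := by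
    intro t
    have h0 : HasDerivAt (fun t : ℝ => 2 * (1 - t)) (-2) t := by
      simpa using ((hasDerivAt_id t).const_sub 1).const_mul 2
    have h1 : HasDerivAt (fun t : ℝ => Real.exp (2 * (1 - t)))
        (Real.exp (2 * (1 - t)) * (-2)) t := by simpa using h0.exp
    have h2 : HasDerivAt (fun t : ℝ => 1 + t ^ 2) (2 * t) t := by
      simpa using (hasDerivAt_pow 2 t).const_add 1
    have h3 : HasDerivAt (fun t : ℝ => (1 + t) ^ 2) (2 * (1 + t)) t := by
      have hid : HasDerivAt (fun t : ℝ => 1 + t) 1 t := by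
        simpa using (hasDerivAt_id t).const_add 1
      simpa using hid.fun_pow 2
    have := ((h1.const_mul (1/4 : ℝ)).fun_mul h2).fun_mul h3
    exact this.congr_deriv (by ring)
  have hFmono : StrictMonoOn F (Set.Icc 0 1) := by
    apply strictMonoOn_of_deriv_pos (convex_Icc 0 1)
    · exact Continuous.continuousOn (by fun_prop)
    · intro x hx
      rw [interior_Icc, mem_Ioo] at hx
      rw [(hder x).deriv]
      have h1x : 0 < 1 - x := by linarith
      have h2x : 0 < 1 + x := by linarith
      exact mul_pos (mul_pos (mul_pos (mul_pos (by norm_num : (0:ℝ) < 1/2)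
        (Real.exp_pos _)) (pow_pos hx.1 2)) h1x) h2x
  intro x hx y hy hxy
  simp only []
  rw [hval x hx, hval y hy]
  exact Real.rpow_lt_rpow (by positivity) (hFmono hx hy hxy) (by norm_num)
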